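/- Let A be an n×n real symmetric positive definite matrix and J the exchange matrix. Then tr(A⁻¹) ≥ tr(((A + JAJ)/2)⁻¹), with equality if and only if A = JAJ. -/

import Mathlib

open Matrix

/-- The `n × n` exchange matrix: ones on the anti-diagonal, zeros elsewhere. -/
def exchangeMatrix (n : ℕ) : Matrix (Fin n) (Fin n) ℝ :=
  Matrix.of fun i j => if j = i.rev then 1 else 0

lemma exchange_transpose (n : ℕ) : (exchangeMatrix n)ᵀ = exchangeMatrix n := by
  ext i j
  simp only [Matrix.transpose_apply, exchangeMatrix, Matrix.of_apply]
  rcases eq_or_ne i j.rev with h | h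
  · subst h; simp [Fin.rev_rev]
  · have h2 : j ≠ i.rev := fun hh => h (by rw [hh, Fin.rev_rev])
    simp [h, h2]

lemma exchange_mul_self (n : ℕ) : exchangeMatrix n * exchangeMatrix n = 1 := by
  ext i j
  rw [Matrix.mul_apply, Finset.sum_eq_single i.rev]
  · simp [exchangeMatrix, Matrix.one_apply, Fin.rev_rev, eq_comm]
  · intro b _ hb
    simp [exchangeMatrix, hb]
  · simp

lemma trace_ct_nonneg {m : Type*} [Fintype m] (C : Matrix m m ℝ) : 0 ≤ (Cᴴ * C).trace := by
  rw [Matrix.trace]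
  refine Finset.sum_nonneg fun j _ => ?_
  simp only [Matrix.diag_apply, Matrix.mul_apply, Matrix.conjTranspose_apply, star_trivial]
  exact Finset.sum_nonneg fun i _ => mul_self_nonneg _

lemma trace_ct_eq_zero {m : Type*} [Fintype m] {C : Matrix m m ℝ}
    (h : (Cᴴ * C).trace = 0) : C = 0 := by
  rw [Matrix.trace] at h
  have h1 : ∀ j ∈ Finset.univ, (0:ℝ) ≤ (Cᴴ * C).diag j := fun j _ => by
    simp only [Matrix.diag_apply, Matrix.mul_apply, Matrix.conjTranspose_apply, star_trivial]
    exact Finset.sum_nonneg fun i _ => mul_self_nonneg _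
  have h2 := (Finset.sum_eq_zero_iff_of_nonneg h1).mp h
  ext i j
  have h3 := h2 j (Finset.mem_univ j)
  simp only [Matrix.diag_apply, Matrix.mul_apply, Matrix.conjTranspose_apply, star_trivial] at h3
  have h4 := (Finset.sum_eq_zero_iff_of_nonneg (fun i _ => mul_self_nonneg (C i j))).mp h3
  simpa [mul_self_eq_zero] using h4 i (Finset.mem_univ i)

/-- For a real symmetric positive definite `A` and the exchange matrix `J`,
`tr(A⁻¹) ≥ tr(((A + JAJ)/2)⁻¹)`, with equality if and only if `A = JAJ`. -/
theorem trace_inv_ge_trace_inv_average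
    (n : ℕ) (A : Matrix (Fin n) (Fin n) ℝ) (hA : A.PosDef) (hAs : A.IsSymm) :
    ((((1 : ℝ)/2) • (A + exchangeMatrix n * A * exchangeMatrix n))⁻¹).trace ≤
        (A⁻¹).trace ∧
      (((((1 : ℝ)/2) • (A + exchangeMatrix n * A * exchangeMatrix n))⁻¹).trace =
          (A⁻¹).trace ↔ A = exchangeMatrix n * A * exchangeMatrix n) := by
  classical
  set J := exchangeMatrix n with hJdef
  have hJt : Jᵀ = J := exchange_transpose n
  have hJJ : J * J = 1 := exchange_mul_self n
  have hJct : Jᴴ = J := by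
    ext i j
    rw [Matrix.conjTranspose_apply, star_trivial]
    exact congrFun (congrFun hJt i) j
  set B := J * A * J with hBdef
  have hBsym : Bᴴ = B := by
    rw [hBdef]
    simp only [Matrix.conjTranspose_mul, hJct, hA.1.eq]
    rw [Matrix.mul_assoc]
  have hBpd : B.PosDef := by
    refine posDef_iff_dotProduct_mulVec.mpr ⟨hBsym, fun x hx => ?_⟩
    have hxJ : J *ᵥ x ≠ 0 := by
      intro h0
      apply hx
      calc x = (1 : Matrix (Fin n) (Fin n) ℝ) *ᵥ x := (Matrix.one_mulVec x).symm
        _ = (J * J) *ᵥ x := by rw [hJJ]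
        _ = J *ᵥ (J *ᵥ x) := (Matrix.mulVec_mulVec _ _ _).symm
        _ = 0 := by rw [h0, Matrix.mulVec_zero]
    have hBJ : B = Jᴴ * A * J := by rw [hBdef, hJct]
    rw [hBJ]
    simpa only [star_mulVec, Matrix.dotProduct_mulVec, Matrix.vecMul_vecMul]
      using hA.dotProduct_mulVec_pos hxJ
  have hdA : IsUnit A.det := hA.isUnit.map (Matrix.detMonoidHom)
  have hdB : IsUnit B.det := hBpd.isUnit.map (Matrix.detMonoidHom)
  have hABpd : (A + B).PosDef := hA.add hBpd
  have hdAB : IsUnit (A + B).det := hABpd.isUnit.map (Matrix.detMonoidHom)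
  have hAi : (A⁻¹).PosDef := hA.inv
  have hBi : (B⁻¹).PosDef := hBpd.inv
  set S := A⁻¹ + B⁻¹ with hSdef
  have hSpd : S.PosDef := hAi.add hBi
  have hdS : IsUnit S.det := hSpd.isUnit.map (Matrix.detMonoidHom)
  have hSS : S * S⁻¹ = 1 := Matrix.mul_nonsing_inv S hdS
  have hSS' : S⁻¹ * S = 1 := Matrix.nonsing_inv_mul S hdS
  have hSeq : A⁻¹ * (A + B) * B⁻¹ = S := by
    rw [Matrix.mul_add, Matrix.nonsing_inv_mul A hdA, Matrix.add_mul, Matrix.one_mul,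
      Matrix.mul_assoc, Matrix.mul_nonsing_inv B hdB, Matrix.mul_one, add_comm]
  have hSinv : S⁻¹ = B * (A + B)⁻¹ * A := by
    rw [← hSeq, Matrix.mul_inv_rev (A⁻¹ * (A + B)) B⁻¹, Matrix.mul_inv_rev A⁻¹ (A + B),
      Matrix.nonsing_inv_nonsing_inv A hdA, Matrix.nonsing_inv_nonsing_inv B hdB]
    simp only [← Matrix.mul_assoc]
  have hkey : B⁻¹ * S⁻¹ * B⁻¹ = B⁻¹ - (A + B)⁻¹ := by
    rw [hSinv]
    have h1 : B⁻¹ * (B * (A + B)⁻¹ * A) * B⁻¹ = (A + B)⁻¹ * (A * B⁻¹) := by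
      simp only [← Matrix.mul_assoc]
      rw [Matrix.nonsing_inv_mul B hdB, Matrix.one_mul, Matrix.mul_assoc]
    rw [h1]
    have h2 : A * B⁻¹ = (A + B) * B⁻¹ - 1 := by
      rw [Matrix.add_mul, Matrix.mul_nonsing_inv B hdB, add_sub_cancel_right]
    rw [h2, Matrix.mul_sub, Matrix.mul_one, ← Matrix.mul_assoc,
      Matrix.nonsing_inv_mul (A + B) hdAB, Matrix.one_mul]
  set X := A⁻¹ - B⁻¹ with hXdef
  have hXsym : Xᴴ = X := by
    rw [hXdef, Matrix.conjTranspose_sub, hAi.1.eq, hBi.1.eq]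
  have hTps : (X * S⁻¹ * X).PosSemidef := by
    have h := hSpd.inv.posSemidef.conjTranspose_mul_mul_same X
    rwa [hXsym] at h
  have hXexp : X = S - (2:ℝ) • B⁻¹ := by
    rw [hXdef, hSdef]; module
  have hident : X * S⁻¹ * X = S - (4:ℝ) • (A + B)⁻¹ := by
    rw [hXexp]
    have expand : (S - (2:ℝ) • B⁻¹) * S⁻¹ * (S - (2:ℝ) • B⁻¹)
        = S - (4:ℝ) • B⁻¹ + (4:ℝ) • (B⁻¹ * S⁻¹ * B⁻¹) := by
      have c1 : S * (S⁻¹ * B⁻¹) = B⁻¹ := by rw [← Matrix.mul_assoc, hSS, Matrix.one_mul]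
      have c2 : B⁻¹ * S⁻¹ * S = B⁻¹ := by rw [Matrix.mul_assoc, hSS', Matrix.mul_one]
      simp only [Matrix.sub_mul, Matrix.mul_sub, Matrix.smul_mul, Matrix.mul_smul,
        Matrix.mul_assoc, hSS, hSS', c1, c2, Matrix.one_mul, Matrix.mul_one, smul_smul]
      module
    rw [expand, hkey]
    module
  have hBinv : B⁻¹ = J * A⁻¹ * J := by
    have hJinv : J⁻¹ = J := Matrix.inv_eq_right_inv hJJ
    rw [hBdef, Matrix.mul_inv_rev (J * A) J, Matrix.mul_inv_rev J A, hJinv, ← Matrix.mul_assoc]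
  have htrB : B⁻¹.trace = A⁻¹.trace := by
    rw [hBinv, Matrix.trace_mul_comm (J * A⁻¹) J, ← Matrix.mul_assoc, hJJ, Matrix.one_mul]
  set M := ((1:ℝ)/2) • (A + B) with hMdef
  have hMinv : M⁻¹ = (2:ℝ) • (A + B)⁻¹ := by
    apply Matrix.inv_eq_right_inv
    rw [hMdef, Matrix.smul_mul, Matrix.mul_smul, smul_smul, Matrix.mul_nonsing_inv _ hdAB]
    norm_num
  have htrace_eq : (X * S⁻¹ * X).trace = 2 * (A⁻¹).trace - 2 * (M⁻¹).trace := by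
    rw [hident, Matrix.trace_sub, Matrix.trace_smul, hMinv, Matrix.trace_smul,
      hSdef, Matrix.trace_add, htrB, smul_eq_mul, smul_eq_mul]
    ring
  have htr_nonneg : 0 ≤ (X * S⁻¹ * X).trace := by
    open scoped MatrixOrder in
    obtain ⟨C, hC⟩ := CStarAlgebra.nonneg_iff_eq_star_mul_self.mp hTps.nonneg
    rw [Matrix.star_eq_conjTranspose] at hC
    rw [hC]; exact trace_ct_nonneg C
  refine ⟨by linarith, ?_, ?_⟩
  · intro h
    have h0 : (X * S⁻¹ * X).trace = 0 := by rw [htrace_eq, h]; ring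
    have hT0 : X * S⁻¹ * X = 0 := by
      open scoped MatrixOrder in
      obtain ⟨C, hC⟩ := CStarAlgebra.nonneg_iff_eq_star_mul_self.mp hTps.nonneg
      rw [Matrix.star_eq_conjTranspose] at hC
      rw [hC] at h0 ⊢
      rw [trace_ct_eq_zero h0]; simp
    have hX0 : X = 0 := by
      open scoped MatrixOrder in
      obtain ⟨C, hC⟩ := CStarAlgebra.nonneg_iff_eq_star_mul_self.mp hSpd.inv.posSemidef.nonneg
      rw [Matrix.star_eq_conjTranspose] at hC
      have h1 : (C * X)ᴴ * (C * X) = 0 := by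
        rw [Matrix.conjTranspose_mul, hXsym]
        calc X * Cᴴ * (C * X) = X * (Cᴴ * C) * X := by simp only [Matrix.mul_assoc]
          _ = 0 := by rw [← hC]; exact hT0
      have h2 : C * X = 0 := Matrix.conjTranspose_mul_self_eq_zero.mp h1
      have h3 : S⁻¹ * X = 0 := by rw [hC, Matrix.mul_assoc, h2, Matrix.mul_zero]
      calc X = S * (S⁻¹ * X) := by rw [← Matrix.mul_assoc, hSS, Matrix.one_mul]
        _ = 0 := by rw [h3, Matrix.mul_zero]
    have hABeq : A⁻¹ = B⁻¹ := by rwa [hXdef, sub_eq_zero] at hX0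
    have h5 : A⁻¹⁻¹ = B⁻¹⁻¹ := by rw [hABeq]
    rwa [Matrix.nonsing_inv_nonsing_inv A hdA, Matrix.nonsing_inv_nonsing_inv B hdB] at h5
  · intro h
    have hMA : M = A := by
      rw [hMdef, ← h, ← two_smul ℝ A, smul_smul]
      norm_num
    rw [hMA]
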